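/- Let d ≥ 3 and k ≥ 1 be integers, let d_0, d_1, …, d_k be natural numbers with Σ_{j=0}^k d_j = d, and let l be an integer with 0 ≤ l ≤ k − 1 and d_l ≥ 1. Let x_min > 0 be a real, let x be a real with k·x_min ≤ x < (k+1)·x_min, and let π₀ be a real with π₀ ≥ d·G(k) + 2k − 1, where G(m) = (d^m − 1)/(d − 1) and G(0) = 0. Define Q = x + Σ_{j=1}^k d_j·G(j)·(x − (j−1)·x_min) and W = π₀ + 1 + Σ_{j=1}^k d_j·G(j). Then (Q + x·d^l − x_min·(l·G(l+1) − (l−1)·G(l))) / (W + d^l) > Q / W. -/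

import Mathlib

/-- Number of nodes in the first `m` levels of a complete `d`-ary tree (`G d 0 = 0`). -/
noncomputable def G (d m : ℕ) : ℝ := ((d : ℝ) ^ m - 1) / ((d : ℝ) - 1)

section Aux

variable {d : ℕ}

lemma G_nonneg (hd : 3 ≤ d) (m : ℕ) : 0 ≤ G d m := by
  have hd3 : (3:ℝ) ≤ (d:ℝ) := by exact_mod_cast hd
  have h1 : (1:ℝ)^m ≤ (d:ℝ)^m := pow_le_pow_left₀ zero_le_one (by linarith) m
  simp only [one_pow] at h1
  exact div_nonneg (by linarith) (by linarith)

lemma G_mono (hd : 3 ≤ d) {m n : ℕ} (h : m ≤ n) : G d m ≤ G d n := by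
  have hd3 : (3:ℝ) ≤ (d:ℝ) := by exact_mod_cast hd
  have h1 : (d:ℝ)^m ≤ (d:ℝ)^n := pow_le_pow_right₀ (by linarith) h
  exact div_le_div_of_nonneg_right (by linarith) (by linarith) |>.trans_eq rfl

lemma G_succ (hd : 3 ≤ d) (n : ℕ) : G d (n+1) = G d n + (d:ℝ)^n := by
  have hd3 : (3:ℝ) ≤ (d:ℝ) := by exact_mod_cast hd
  have hne : (d:ℝ) - 1 ≠ 0 := by linarith
  simp only [G]
  field_simp
  ring

lemma G_rel (hd : 3 ≤ d) (n : ℕ) : (d:ℝ)^n = ((d:ℝ) - 1) * G d n + 1 := by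
  have hd3 : (3:ℝ) ≤ (d:ℝ) := by exact_mod_cast hd
  have hne : (d:ℝ) - 1 ≠ 0 := by linarith
  simp only [G]
  field_simp
  ring

lemma two_G_lt (hd : 3 ≤ d) (n : ℕ) : 2 * G d n < (d:ℝ)^n := by
  have hd3 : (3:ℝ) ≤ (d:ℝ) := by exact_mod_cast hd
  have h1 : (1:ℝ)^n ≤ (d:ℝ)^n := pow_le_pow_left₀ zero_le_one (by linarith) n
  simp only [one_pow] at h1
  have hrel := G_rel hd n
  nlinarith [G_nonneg hd n]

lemma nat_succ_le_pow (hd : 3 ≤ d) (i : ℕ) : (i:ℝ) + 1 ≤ (d:ℝ)^i := by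
  have h2 : i + 1 ≤ 2^i := Nat.lt_two_pow_self (n := i)
  have h3 : 2^i ≤ d^i := Nat.pow_le_pow_left (by omega) i
  have : ((i + 1 : ℕ) : ℝ) ≤ ((d^i : ℕ) : ℝ) := by exact_mod_cast le_trans h2 h3
  push_cast at this
  linarith

lemma G_pow_le (hd : 3 ≤ d) {j l : ℕ} (hjl : j ≤ l) :
    (d:ℝ)^(l-j) * G d j ≤ G d l := by
  have hd3 : (3:ℝ) ≤ (d:ℝ) := by exact_mod_cast hd
  have hpos : (0:ℝ) < (d:ℝ) - 1 := by linarith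
  have hpow : (d:ℝ)^(l-j) * (d:ℝ)^j = (d:ℝ)^l := by
    rw [← pow_add]; congr 1; omega
  have h1 : (1:ℝ)^(l-j) ≤ (d:ℝ)^(l-j) := pow_le_pow_left₀ zero_le_one (by linarith) _
  simp only [one_pow] at h1
  have key : (d:ℝ)^(l-j) * ((d:ℝ)^j - 1) ≤ (d:ℝ)^l - 1 := by nlinarith
  have : (d:ℝ)^(l-j) * G d j = ((d:ℝ)^(l-j) * ((d:ℝ)^j - 1)) / ((d:ℝ) - 1) := by
    simp only [G]; ring
  rw [this, G]
  gcongr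

/-- The crucial per-level bound. -/
lemma key_term (hd : 3 ≤ d) (l : ℕ) (j : ℕ) (hj : 1 ≤ j) :
    G d j * (((j:ℝ) - 1) * (d:ℝ)^l - ((l:ℝ) * (d:ℝ)^l + G d l)) ≥
      -(G d l * G d (l+1)) := by
  have hd3 : (3:ℝ) ≤ (d:ℝ) := by exact_mod_cast hd
  have hg := G_nonneg hd
  have hB1 : (1:ℝ) ≤ (d:ℝ)^l := by
    have := pow_le_pow_left₀ zero_le_one (show (1:ℝ) ≤ d by linarith) l
    simpa using this
  have hgl1 : G d (l+1) = G d l + (d:ℝ)^l := G_succ hd l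
  rcases lt_trichotomy j (l+1) with h | h | h
  · -- j ≤ l
    have hjl : j ≤ l := by omega
    have h4 : (d:ℝ)^(l-j) * G d j ≤ G d l := G_pow_le hd hjl
    have h5 : ((l-j:ℕ):ℝ) + 1 ≤ (d:ℝ)^(l-j) := nat_succ_le_pow hd _
    have hcast : ((l-j:ℕ):ℝ) = (l:ℝ) - (j:ℝ) := by
      push_cast [hjl]; ring
    rw [hcast] at h5
    have h6 : G d j ≤ G d l := G_mono hd hjl
    have hc : G d j * ((l:ℝ) - (j:ℝ) + 1) ≤ G d l := by
      calc G d j * ((l:ℝ) - (j:ℝ) + 1) ≤ G d j * (d:ℝ)^(l-j) :=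
            mul_le_mul_of_nonneg_left h5 (hg j)
        _ = (d:ℝ)^(l-j) * G d j := by ring
        _ ≤ G d l := h4
    have h7 : G d j * (((l:ℝ) - (j:ℝ) + 1) * (d:ℝ)^l) ≤ G d l * (d:ℝ)^l := by
      calc G d j * (((l:ℝ) - (j:ℝ) + 1) * (d:ℝ)^l)
          = (G d j * ((l:ℝ) - (j:ℝ) + 1)) * (d:ℝ)^l := by ring
        _ ≤ G d l * (d:ℝ)^l :=
            mul_le_mul_of_nonneg_right hc (by linarith)
    have h8 : G d j * G d l ≤ G d l * G d l :=
      mul_le_mul_of_nonneg_right h6 (hg l)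
    rw [hgl1]
    have hre : G d j * (((j:ℝ) - 1) * (d:ℝ)^l - ((l:ℝ) * (d:ℝ)^l + G d l)) =
        -(G d j * (((l:ℝ) - (j:ℝ) + 1) * (d:ℝ)^l) + G d j * G d l) := by ring
    rw [hre]
    nlinarith
  · -- j = l + 1 : equality
    subst h
    apply ge_of_eq
    push_cast
    ring
  · -- j ≥ l + 2 : LHS nonnegative
    have hj2 : (l:ℝ) + 2 ≤ (j:ℝ) := by exact_mod_cast h
    have hGlB : G d l < (d:ℝ)^l := by
      have := two_G_lt hd l
      nlinarith [hg l]
    have hF : 0 ≤ ((j:ℝ) - 1) * (d:ℝ)^l - ((l:ℝ) * (d:ℝ)^l + G d l) := by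
      nlinarith
    have := mul_nonneg (hg j) hF
    nlinarith [mul_nonneg (hg l) (hg (l+1))]

end Aux

set_option maxHeartbeats 1000000 in
/-- Lemma 3 of the paper: moving a unit of propagation from level `l` to level `l + 1`
strictly increases the root's utility `Q / W`. -/
theorem stmt_11 (d k : ℕ) (hd : 3 ≤ d) (hk : 1 ≤ k)
    (dv : ℕ → ℕ) (hsum : ∑ j ∈ Finset.range (k + 1), dv j = d)
    (l : ℕ) (hl : l ≤ k - 1) (hdl : 1 ≤ dv l)
    (xmin x π₀ : ℝ) (hxmin : 0 < xmin)
    (hx1 : (k : ℝ) * xmin ≤ x) (hx2 : x < ((k : ℝ) + 1) * xmin)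
    (hπ : (d : ℝ) * G d k + 2 * (k : ℝ) - 1 ≤ π₀) :
    ((x + ∑ j ∈ Finset.Icc 1 k, (dv j : ℝ) * G d j * (x - ((j : ℝ) - 1) * xmin))
        + x * (d : ℝ) ^ l - xmin * ((l : ℝ) * G d (l + 1) - ((l : ℝ) - 1) * G d l)) /
      ((π₀ + 1 + ∑ j ∈ Finset.Icc 1 k, (dv j : ℝ) * G d j) + (d : ℝ) ^ l)
    > (x + ∑ j ∈ Finset.Icc 1 k, (dv j : ℝ) * G d j * (x - ((j : ℝ) - 1) * xmin)) /
      (π₀ + 1 + ∑ j ∈ Finset.Icc 1 k, (dv j : ℝ) * G d j) := by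
  have hd3 : (3:ℝ) ≤ (d:ℝ) := by exact_mod_cast hd
  have hk1 : (1:ℝ) ≤ (k:ℝ) := by exact_mod_cast hk
  have hlk : l + 1 ≤ k := by omega
  have hlk' : (l:ℝ) + 1 ≤ (k:ℝ) := by exact_mod_cast hlk
  have hg := G_nonneg hd
  set B : ℝ := (d:ℝ)^l with hBdef
  have hB1 : (1:ℝ) ≤ B := by
    rw [hBdef]
    have := pow_le_pow_left₀ zero_le_one (show (1:ℝ) ≤ d by linarith) l
    simpa using this
  set S : ℝ := ∑ j ∈ Finset.Icc 1 k, (dv j : ℝ) * G d j with hS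
  set T : ℝ := ∑ j ∈ Finset.Icc 1 k, (dv j : ℝ) * G d j * ((j:ℝ) - 1) with hT
  have hS0 : 0 ≤ S := Finset.sum_nonneg fun j _ => mul_nonneg (Nat.cast_nonneg _) (hg j)
  have hπ1 : (1:ℝ) ≤ π₀ := by
    have h0 : 0 ≤ (d:ℝ) * G d k := mul_nonneg (by linarith) (hg k)
    linarith
  have hQ : ∑ j ∈ Finset.Icc 1 k, (dv j : ℝ) * G d j * (x - ((j : ℝ) - 1) * xmin)
      = x * S - xmin * T := by
    rw [hS, hT, Finset.mul_sum, Finset.mul_sum, ← Finset.sum_sub_distrib]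
    exact Finset.sum_congr rfl fun j _ => by ring
  set C : ℝ := (l:ℝ) * B + G d l with hC
  have hCeq : (l : ℝ) * G d (l + 1) - ((l : ℝ) - 1) * G d l = C := by
    rw [hC, G_succ hd l, hBdef]; ring
  have hBT : B * T - C * S
      = ∑ j ∈ Finset.Icc 1 k, (dv j : ℝ) * (G d j * (((j:ℝ) - 1) * B - C)) := by
    rw [hS, hT, Finset.mul_sum, Finset.mul_sum, ← Finset.sum_sub_distrib]
    exact Finset.sum_congr rfl fun j _ => by ring
  have hdvd : (∑ j ∈ Finset.Icc 1 k, (dv j : ℝ)) ≤ (d:ℝ) := by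
    have h1 : ∑ j ∈ Finset.Icc 1 k, dv j ≤ d := by
      rw [← hsum]
      apply Finset.sum_le_sum_of_subset
      intro a ha
      simp only [Finset.mem_Icc] at ha
      simp only [Finset.mem_range]
      omega
    calc (∑ j ∈ Finset.Icc 1 k, (dv j : ℝ))
        = ((∑ j ∈ Finset.Icc 1 k, dv j : ℕ) : ℝ) := by push_cast; rfl
      _ ≤ (d:ℝ) := by exact_mod_cast h1
  have hsum_low : -(G d l * G d (l+1)) * (d:ℝ) ≤ B * T - C * S := by
    rw [hBT]
    have step1 : ∑ j ∈ Finset.Icc 1 k, (dv j : ℝ) * (-(G d l * G d (l+1)))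
        ≤ ∑ j ∈ Finset.Icc 1 k, (dv j : ℝ) * (G d j * (((j:ℝ) - 1) * B - C)) := by
      apply Finset.sum_le_sum
      intro j hj
      have hj1 : 1 ≤ j := (Finset.mem_Icc.mp hj).1
      have := key_term hd l j hj1
      rw [hC, hBdef]
      exact mul_le_mul_of_nonneg_left this (Nat.cast_nonneg _)
    have step2 : -(G d l * G d (l+1)) * (d:ℝ)
        ≤ ∑ j ∈ Finset.Icc 1 k, (dv j : ℝ) * (-(G d l * G d (l+1))) := by
      rw [← Finset.sum_mul]
      have hM : 0 ≤ G d l * G d (l+1) := mul_nonneg (hg l) (hg (l+1))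
      nlinarith [hdvd]
    linarith
  -- core positivity
  have hGlB : G d l < B := by
    have := two_G_lt hd l
    rw [hBdef]
    nlinarith [hg l]
  have hkBC : B - G d l ≤ (k:ℝ) * B - C := by
    rw [hC]
    nlinarith
  have hπ2 : (d:ℝ) * G d (l+1) + 2 * (l:ℝ) + 1 ≤ π₀ := by
    have hmono : G d (l+1) ≤ G d k := G_mono hd hlk
    have := mul_le_mul_of_nonneg_left hmono (show (0:ℝ) ≤ (d:ℝ) by linarith)
    linarith
  have hcore : 0 < π₀ * ((k:ℝ) * B - C) - C - (d:ℝ) * (G d l * G d (l+1)) := by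
    have h1 : (0:ℝ) ≤ B - G d l := by linarith
    have h2 : (0:ℝ) ≤ (d:ℝ) * G d (l+1) + 2 * (l:ℝ) + 1 := by
      have := mul_nonneg (show (0:ℝ) ≤ (d:ℝ) by linarith) (hg (l+1))
      have hl0 : (0:ℝ) ≤ (l:ℝ) := Nat.cast_nonneg _
      linarith
    have h3 : ((d:ℝ) * G d (l+1) + 2 * (l:ℝ) + 1) * (B - G d l) ≤ π₀ * ((k:ℝ) * B - C) :=
      mul_le_mul hπ2 hkBC h1 (by linarith)
    have hid : ((d:ℝ) * G d (l+1) + 2 * (l:ℝ) + 1) * (B - G d l) - C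
          - (d:ℝ) * (G d l * G d (l+1))
        = ((d:ℝ) * G d (l+1) + (l:ℝ) + 1) * (B - 2 * G d l) := by
      rw [hC, G_succ hd l, hBdef, G_rel hd l]
      ring
    have h4 : 0 < B - 2 * G d l := by
      have := two_G_lt hd l
      rw [hBdef]; linarith
    have h5 : 0 < (d:ℝ) * G d (l+1) + (l:ℝ) + 1 := by
      have := mul_nonneg (show (0:ℝ) ≤ (d:ℝ) by linarith) (hg (l+1))
      have hl0 : (0:ℝ) ≤ (l:ℝ) := Nat.cast_nonneg _
      linarith
    nlinarith [mul_pos h5 h4]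
  -- assemble
  have hW : 0 < π₀ + 1 + S := by linarith
  have hWB : 0 < (π₀ + 1 + S) + B := by linarith
  rw [hQ, hCeq, gt_iff_lt, div_lt_div_iff₀ hW hWB]
  have hπ0 : (0:ℝ) < π₀ := by linarith
  have hB0 : (0:ℝ) < B := by linarith
  have hx' : (k:ℝ) * xmin * (π₀ * B) ≤ x * (π₀ * B) :=
    mul_le_mul_of_nonneg_right hx1 (le_of_lt (mul_pos hπ0 hB0))
  have hc2 : 0 < xmin * (π₀ * ((k:ℝ) * B - C) - C - (d:ℝ) * (G d l * G d (l+1))) :=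
    mul_pos hxmin hcore
  have hc3 : xmin * (-(G d l * G d (l+1)) * (d:ℝ)) ≤ xmin * (B * T - C * S) :=
    mul_le_mul_of_nonneg_left hsum_low (le_of_lt hxmin)
  have hfin : 0 < x * B * π₀ + xmin * (B * T) - xmin * (C * (π₀ + 1 + S)) := by
    nlinarith [hx', hc2, hc3]
  have hexp : ((x + (x * S - xmin * T)) + x * B - xmin * C) * (π₀ + 1 + S)
      - (x + (x * S - xmin * T)) * ((π₀ + 1 + S) + B)
      = x * B * π₀ + xmin * (B * T) - xmin * (C * (π₀ + 1 + S)) := by ring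
  linarith [hexp]
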